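/- Let c ≥ 2, 1 ≤ s ≤ c-1, and suppose q > c - λ where λ ≡ sn (mod c) and 1 ≤ λ ≤ min{s, c-s}. Then every (c,s)-frameproof code C ⊆ [q]^n satisfies |C| ≤ q^{⌈sn/c⌉}. -/

import Mathlib

/-- A code `C ⊆ [q]^n` is (c,s)-frameproof: for every codeword `x⁰ ∈ C` and every
collection `x¹,…,x^c ∈ C` (repeats allowed) with `xʲ ≠ x⁰`, there is a coordinate
at which fewer than `s` of the `xʲ` agree with `x⁰`. -/
def IsFrameproofCode {n q : ℕ} (c s : ℕ) (C : Finset (Fin n → Fin q)) : Prop :=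
  ∀ x0 ∈ C, ∀ x : Fin c → Fin n → Fin q,
    (∀ j, x j ∈ C) → (∀ j, x j ≠ x0) →
    ∃ i : Fin n, (Finset.univ.filter (fun j => x j i = x0 i)).card < s

namespace Stmt11Aux

variable {n q : ℕ}

/-- `x` *owns* the coordinate set `T` (with respect to the code `C`) if no other codeword
agrees with `x` on all coordinates of `T`. -/
def Own (C : Finset (Fin n → Fin q)) (x : Fin n → Fin q) (T : Finset (Fin n)) : Prop :=
  ∀ y ∈ C, (∀ i ∈ T, y i = x i) → y = x

/-- The set of codewords owning `T`. -/
noncomputable def owners (C : Finset (Fin n → Fin q)) (T : Finset (Fin n)) :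
    Finset (Fin n → Fin q) :=
  @Finset.filter _ (fun x => Own C x T) (Classical.decPred _) C

lemma mem_owners {C : Finset (Fin n → Fin q)} {T : Finset (Fin n)} {x : Fin n → Fin q} :
    x ∈ owners C T ↔ x ∈ C ∧ Own C x T := by
  classical
  unfold owners
  rw [Finset.mem_filter]

lemma owners_mono {C : Finset (Fin n → Fin q)} {T T' : Finset (Fin n)} (h : T ⊆ T') :
    owners C T ⊆ owners C T' := by
  intro x hx
  rw [mem_owners] at hx ⊢
  exact ⟨hx.1, fun y hy hagree => hx.2 y hy (fun i hi => hagree i (h hi))⟩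

lemma card_owners_le (C : Finset (Fin n → Fin q)) (T : Finset (Fin n)) :
    (owners C T).card ≤ q ^ T.card := by
  classical
  have h : (owners C T).card ≤ (Finset.univ : Finset (↥T → Fin q)).card := by
    apply Finset.card_le_card_of_injOn (fun x (i : ↥T) => x i.1)
    · exact fun a _ => Finset.mem_univ _
    · intro x hx y hy hxy
      rw [Finset.mem_coe, mem_owners] at hx hy
      exact (hx.2 y hy.1 (fun i hi => (congrFun hxy ⟨i, hi⟩).symm)).symm
  calc (owners C T).card ≤ (Finset.univ : Finset (↥T → Fin q)).card := h
    _ = q ^ T.card := by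
        rw [Finset.card_univ, Fintype.card_fun, Fintype.card_coe, Fintype.card_fin]

/-- The key "cylinder trade" bound: owners of `insert p R` are at most
`a + (q^{|R|} - a) * q` where `a` is the number of owners of `R`. -/
lemma card_owners_insert_le (C : Finset (Fin n → Fin q)) {R : Finset (Fin n)} {p : Fin n}
    (hp : p ∉ R) :
    (owners C (insert p R)).card ≤
      (owners C R).card + (q ^ R.card - (owners C R).card) * q := by
  classical
  set res : (Fin n → Fin q) → (↥R → Fin q) := fun x (i : ↥R) => x i.1 with hres
  set P : Finset (↥R → Fin q) := (owners C R).image res with hP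
  have hinjR : Set.InjOn res ↑(owners C R) := by
    intro x hx y hy hxy
    rw [Finset.mem_coe, mem_owners] at hx hy
    exact (hx.2 y hy.1 (fun i hi => (congrFun hxy ⟨i, hi⟩).symm)).symm
  have hPcard : P.card = (owners C R).card := Finset.card_image_of_injOn hinjR
  set OG := owners C (insert p R) with hOG
  have hsplit : (OG.filter (fun x => res x ∈ P)).card
      + (OG.filter (fun x => ¬ res x ∈ P)).card = OG.card :=
    Finset.card_filter_add_card_filter_not _
  have h1 : OG.filter (fun x => res x ∈ P) ⊆ owners C R := by
    intro x hx
    rw [Finset.mem_filter] at hx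
    obtain ⟨hxOG, hxP⟩ := hx
    obtain ⟨z, hz, hzx⟩ := Finset.mem_image.1 hxP
    have hxC : x ∈ C := (mem_owners.1 hxOG).1
    have hzOwn := (mem_owners.1 hz).2
    have hxz : x = z := hzOwn x hxC (fun i hi => (congrFun hzx ⟨i, hi⟩).symm)
    rw [hxz]
    exact hz
  have h2 : (OG.filter (fun x => ¬ res x ∈ P)).card ≤ (q ^ R.card - (owners C R).card) * q := by
    have hmap : (OG.filter (fun x => ¬ res x ∈ P)).card ≤
        (((Finset.univ : Finset (↥R → Fin q)) \ P) ×ˢ (Finset.univ : Finset (Fin q))).card := by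
      apply Finset.card_le_card_of_injOn (fun x => (res x, x p))
      · intro x hx
        rw [Finset.mem_coe, Finset.mem_filter] at hx
        exact Finset.mem_product.2
          ⟨Finset.mem_sdiff.2 ⟨Finset.mem_univ _, hx.2⟩, Finset.mem_univ _⟩
      · intro x hx y hy hxy
        rw [Finset.mem_coe, Finset.mem_filter] at hx hy
        have hxOG := mem_owners.1 hx.1
        have hyOG := mem_owners.1 hy.1
        have e1 : res x = res y := congrArg Prod.fst hxy
        have e2 : x p = y p := congrArg Prod.snd hxy
        refine (hxOG.2 y hyOG.1 ?_).symm
        intro i hi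
        rcases Finset.mem_insert.1 hi with h | h
        · rw [h]; exact e2.symm
        · exact (congrFun e1 ⟨i, h⟩).symm
    have hcard : (((Finset.univ : Finset (↥R → Fin q)) \ P) ×ˢ
        (Finset.univ : Finset (Fin q))).card = (q ^ R.card - (owners C R).card) * q := by
      rw [Finset.card_product, Finset.card_sdiff_of_subset (Finset.subset_univ _), Finset.card_univ,
        Finset.card_univ, Fintype.card_fun, Fintype.card_coe, Fintype.card_fin, hPcard]
    omega
  have h1c : (OG.filter (fun x => res x ∈ P)).card ≤ (owners C R).card :=
    Finset.card_le_card h1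
  omega

/-- Round-robin construction: given demands `δ u ≤ w` summing to `w * D`, there are sets
`S 0, …, S (w-1)` of size at most `D` such that every `u` lies in at least `δ u` of them. -/
lemma round_robin {w D : ℕ} (hw : 0 < w) (δ : Fin n → ℕ) (hδ : ∀ u, δ u ≤ w)
    (htot : (∑ u, δ u) = w * D) :
    ∃ S : ℕ → Finset (Fin n),
      (∀ m, (S m).card ≤ D) ∧
      (∀ u, δ u ≤ ((Finset.range w).filter (fun m => u ∈ S m)).card) := by
  classical
  set T : Fin n → ℕ := fun u => ∑ v ∈ Finset.univ.filter (fun v => v < u), δ v with hT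
  have hinsert : ∀ u : Fin n,
      T u + δ u = ∑ v ∈ insert u (Finset.univ.filter (fun v => v < u)), δ v := by
    intro u
    rw [Finset.sum_insert (by simp)]
    exact Nat.add_comm _ _
  have hwin : ∀ u : Fin n, T u + δ u ≤ w * D := by
    intro u
    rw [← htot, hinsert u]
    exact Finset.sum_le_sum_of_subset (Finset.subset_univ _)
  have hsep : ∀ u v : Fin n, u < v → T u + δ u ≤ T v := by
    intro u v huv
    rw [hinsert u]
    apply Finset.sum_le_sum_of_subset
    intro a ha
    rcases Finset.mem_insert.1 ha with h | h
    · rw [h]; simp [huv]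
    · rw [Finset.mem_filter] at h ⊢
      exact ⟨Finset.mem_univ _, lt_trans h.2 huv⟩
  set S : ℕ → Finset (Fin n) := fun m =>
    Finset.univ.filter (fun u => ∃ t, T u ≤ t ∧ t < T u + δ u ∧ t % w = m) with hS
  refine ⟨S, ?_, ?_⟩
  · intro m
    set f : Fin n → ℕ := fun u =>
      if h : ∃ t, T u ≤ t ∧ t < T u + δ u ∧ t % w = m then h.choose else 0 with hf
    have hfspec : ∀ u ∈ S m, T u ≤ f u ∧ f u < T u + δ u ∧ f u % w = m := by
      intro u hu
      rw [hS, Finset.mem_filter] at hu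
      have hex := hu.2
      rw [hf]
      simp only [dif_pos hex]
      exact hex.choose_spec
    have h1 : (S m).card ≤ ((Finset.range (w * D)).filter (fun t => t % w = m)).card := by
      apply Finset.card_le_card_of_injOn f
      · intro u hu
        obtain ⟨ha, hb, hc⟩ := hfspec u hu
        exact Finset.mem_filter.2 ⟨Finset.mem_range.2 (lt_of_lt_of_le hb (hwin u)), hc⟩
      · intro u hu v hv heq
        rw [Finset.mem_coe] at hu hv
        by_contra hne
        obtain ⟨a1, a2, _⟩ := hfspec u hu
        obtain ⟨b1, b2, _⟩ := hfspec v hv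
        rcases lt_or_gt_of_ne hne with h | h
        · have := hsep u v h
          omega
        · have := hsep v u h
          omega
    have h2 : ((Finset.range (w * D)).filter (fun t => t % w = m)).card
        ≤ (Finset.range D).card := by
      apply Finset.card_le_card_of_injOn (fun t => t / w)
      · intro t ht
        rw [Finset.mem_coe, Finset.mem_filter, Finset.mem_range] at ht
        exact Finset.mem_range.2 ((Nat.div_lt_iff_lt_mul hw).2
          (lt_of_lt_of_eq ht.1 (Nat.mul_comm w D)))
      · intro t1 h1' t2 h2' heq
        rw [Finset.mem_coe, Finset.mem_filter] at h1' h2'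
        have e1 := Nat.div_add_mod t1 w
        have e2 := Nat.div_add_mod t2 w
        have heq' : t1 / w = t2 / w := heq
        calc t1 = w * (t1 / w) + t1 % w := e1.symm
          _ = w * (t2 / w) + t2 % w := by rw [heq', h1'.2, h2'.2]
          _ = t2 := e2
    have := le_trans h1 h2
    rwa [Finset.card_range] at this
  · intro u
    have himg : (Finset.Ico (T u) (T u + δ u)).image (fun t => t % w) ⊆
        (Finset.range w).filter (fun m => u ∈ S m) := by
      intro m hm
      obtain ⟨t, ht, rfl⟩ := Finset.mem_image.1 hm
      rw [Finset.mem_Ico] at ht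
      refine Finset.mem_filter.2 ⟨Finset.mem_range.2 (Nat.mod_lt _ hw), ?_⟩
      rw [hS]
      exact Finset.mem_filter.2 ⟨Finset.mem_univ _, ⟨t, ht.1, ht.2, rfl⟩⟩
    have hinj : Set.InjOn (fun t => t % w) ↑(Finset.Ico (T u) (T u + δ u)) := by
      have key : ∀ a b : ℕ, T u ≤ a → b < T u + δ u → a % w = b % w → a < b → False := by
        intro a b ha1 hb2 hmod hab'
        have hdvd : w ∣ b - a := (Nat.modEq_iff_dvd' (le_of_lt hab')).1 hmod
        have hpos : 0 < b - a := by omega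
        have hge := Nat.le_of_dvd hpos hdvd
        have := hδ u
        omega
      intro a ha b hb hab
      rw [Finset.coe_Ico, Set.mem_Ico] at ha hb
      by_contra hne
      rcases lt_or_gt_of_ne hne with h | h
      · exact key a b ha.1 hb.2 hab h
      · exact key b a hb.1 ha.2 hab.symm h
    calc δ u = (Finset.Ico (T u) (T u + δ u)).card := by rw [Nat.card_Ico]; omega
      _ = ((Finset.Ico (T u) (T u + δ u)).image (fun t => t % w)).card :=
          (Finset.card_image_of_injOn hinj).symm
      _ ≤ _ := Finset.card_le_card himg

lemma card_filter_val_lt (c N : ℕ) (h : N ≤ c) :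
    ((Finset.univ : Finset (Fin c)).filter (fun j : Fin c => (j : ℕ) < N)).card = N := by
  have key : ((Finset.univ : Finset (Fin c)).filter (fun j : Fin c => (j : ℕ) < N)).card
      = (Finset.range N).card := by
    apply Finset.card_bij (fun (j : Fin c) _ => (j : ℕ))
    · intro a ha
      rw [Finset.mem_filter] at ha
      exact Finset.mem_range.2 ha.2
    · intro a _ b _ hab
      exact Fin.val_injective hab
    · intro b hb
      rw [Finset.mem_range] at hb
      exact ⟨⟨b, lt_of_lt_of_le hb h⟩, Finset.mem_filter.2 ⟨Finset.mem_univ _, hb⟩, rfl⟩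
  rw [key, Finset.card_range]

end Stmt11Aux

open Stmt11Aux in
/-- Let c ≥ 2, 1 ≤ s ≤ c-1, q > c - λ where λ ≡ sn (mod c) and
1 ≤ λ ≤ min{s, c-s}. Then every (c,s)-frameproof code C ⊆ [q]^n satisfies
|C| ≤ q^⌈sn/c⌉. -/
theorem stmt11 (n q c s lam : ℕ) (hc : 2 ≤ c) (hs1 : 1 ≤ s) (hs2 : s ≤ c - 1)
    (hlam1 : 1 ≤ lam) (hlam2 : lam ≤ min s (c - s))
    (hmod : lam % c = (s * n) % c) (hq : c - lam < q)
    (C : Finset (Fin n → Fin q)) (hfp : IsFrameproofCode c s C) :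
    C.card ≤ q ^ ((s * n + c - 1) / c) := by
  classical
  have hlams : lam ≤ s := le_trans hlam2 (min_le_left _ _)
  have hlamcs : lam ≤ c - s := le_trans hlam2 (min_le_right _ _)
  have hlamc : lam < c := by omega
  have hq1 : 1 ≤ q := by omega
  set D := s * n / c with hD
  have hmod2 : (s * n) % c = lam := by rw [← hmod]; exact Nat.mod_eq_of_lt hlamc
  have hsn : s * n = c * D + lam := by
    conv_lhs => rw [← Nat.div_add_mod (s * n) c]
    rw [hmod2]
  have hK : (s * n + c - 1) / c = D + 1 := by
    have hcpos : 0 < c := by omega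
    have h2 : (D + 1) * c = D * c + c := by ring
    have h3 : c * D = D * c := Nat.mul_comm c D
    have h1 : s * n + c - 1 = (lam - 1) + (D + 1) * c := by omega
    rw [h1, Nat.add_mul_div_right _ _ hcpos, Nat.div_eq_of_lt (by omega : lam - 1 < c)]
    omega
  rw [hK]
  by_cases hn : n ≤ D + 1
  · calc C.card ≤ (Finset.univ : Finset (Fin n → Fin q)).card := Finset.card_le_univ C
      _ = q ^ n := by
          rw [Finset.card_univ, Fintype.card_fun, Fintype.card_fin, Fintype.card_fin]
      _ ≤ q ^ (D + 1) := Nat.pow_le_pow_right hq1 hn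
  · push_neg at hn
    -- main case : D + 1 < n
    have hDn : D ≤ n := by omega
    have hA : ((Finset.univ : Finset (Fin n)).powersetCard D).Nonempty :=
      Finset.powersetCard_nonempty.2 (by simpa using hDn)
    obtain ⟨Rstar, hRmem, hRmax⟩ :=
      Finset.exists_max_image _ (fun T => (owners C T).card) hA
    have hRcard : Rstar.card = D := (Finset.mem_powersetCard.1 hRmem).2
    set astar := (owners C Rstar).card with hast
    have hamax : ∀ T : Finset (Fin n), T.card = D → (owners C T).card ≤ astar := by
      intro T hT
      exact hRmax T (Finset.mem_powersetCard.2 ⟨Finset.subset_univ _, hT⟩)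
    have hcompl : ∃ p : Fin n, p ∉ Rstar := by
      by_contra h
      push_neg at h
      have hsub : (Finset.univ : Finset (Fin n)) ⊆ Rstar := fun i _ => h i
      have hcard := Finset.card_le_card hsub
      rw [Finset.card_univ, Fintype.card_fin, hRcard] at hcard
      omega
    obtain ⟨p, hp⟩ := hcompl
    set G := insert p Rstar with hG
    have hGcard : G.card = D + 1 := by
      rw [hG, Finset.card_insert_of_notMem hp, hRcard]
    set w := c - lam with hw
    have hwpos : 0 < w := by omega
    set δ : Fin n → ℕ := fun u => if u ∈ G then s - lam else s with hδ
    have hδw : ∀ u, δ u ≤ w := by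
      intro u
      rw [hδ]
      dsimp only
      split <;> omega
    have htot : (∑ u, δ u) = w * D := by
      have hpt : ∀ u : Fin n, δ u + (if u ∈ G then lam else 0) = s := by
        intro u
        rw [hδ]
        dsimp only
        split <;> omega
      have hG1 : (∑ u ∈ G, lam) = ∑ u : Fin n, (if u ∈ G then lam else 0) := by
        rw [← Finset.sum_filter]
        congr 1
        ext u
        simp
      have h1 : (∑ u, δ u) + lam * G.card = s * n := by
        calc (∑ u, δ u) + lam * G.card
            = (∑ u, δ u) + (∑ u ∈ G, lam) := by
              rw [Finset.sum_const, smul_eq_mul, mul_comm]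
          _ = (∑ u, δ u) + (∑ u : Fin n, if u ∈ G then lam else 0) := by rw [hG1]
          _ = ∑ u : Fin n, (δ u + if u ∈ G then lam else 0) := (Finset.sum_add_distrib).symm
          _ = ∑ _u : Fin n, s := Finset.sum_congr rfl (fun u _ => hpt u)
          _ = n * s := by rw [Finset.sum_const, Finset.card_univ, Fintype.card_fin, smul_eq_mul]
          _ = s * n := mul_comm n s
      rw [hGcard] at h1
      have l1 : w * D = c * D - lam * D := by rw [hw, Nat.sub_mul]
      have l2 : lam * (D + 1) = lam * D + lam := by ring
      have l3 : lam * D ≤ c * D := Nat.mul_le_mul_right D (le_of_lt hlamc)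
      omega
    obtain ⟨S0, hS0card, hS0cov⟩ := round_robin hwpos δ hδw htot
    have hpad : ∀ m : ℕ, ∃ T : Finset (Fin n), S0 m ⊆ T ∧ T.card = D := by
      intro m
      obtain ⟨T, hT1, _hT2, hT3⟩ := Finset.exists_subsuperset_card_eq
        (Finset.subset_univ (S0 m)) (hS0card m) (by simpa using hDn)
      exact ⟨T, hT1, hT3⟩
    choose S hSsub hScard using hpad
    -- Claim A: every codeword owns G or one of the S m (m < w)
    have claimA : ∀ x ∈ C, Own C x G ∨ ∃ m, m < w ∧ Own C x (S m) := by
      intro x hx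
      by_contra hcon
      push_neg at hcon
      obtain ⟨hnG, hnS⟩ := hcon
      have hyG : ∃ y, y ∈ C ∧ (∀ i ∈ G, y i = x i) ∧ y ≠ x := by
        unfold Own at hnG
        push_neg at hnG
        obtain ⟨y, hy1, hy2, hy3⟩ := hnG
        exact ⟨y, hy1, hy2, hy3⟩
      obtain ⟨yG, hyGC, hyGa, hyGne⟩ := hyG
      have hySex : ∀ m : ℕ, ∃ y, m < w → (y ∈ C ∧ (∀ i ∈ S m, y i = x i) ∧ y ≠ x) := by
        intro m
        by_cases hm : m < w
        · have hns := hnS m hm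
          unfold Own at hns
          push_neg at hns
          obtain ⟨y, hy1, hy2, hy3⟩ := hns
          exact ⟨y, fun _ => ⟨hy1, hy2, hy3⟩⟩
        · exact ⟨x, fun h => absurd h hm⟩
      choose yS hyS using hySex
      set imp : Fin c → (Fin n → Fin q) := fun j =>
        if (j : ℕ) < lam then yG else yS ((j : ℕ) - lam) with himp
      have hjw : ∀ j : Fin c, ¬ ((j : ℕ) < lam) → (j : ℕ) - lam < w := by
        intro j hj
        have := j.isLt
        omega
      have himpC : ∀ j, imp j ∈ C := by
        intro j
        rw [himp]
        dsimp only
        split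
        · exact hyGC
        · next hnot => exact (hyS _ (hjw j hnot)).1
      have himpne : ∀ j, imp j ≠ x := by
        intro j
        rw [himp]
        dsimp only
        split
        · exact hyGne
        · next hnot => exact (hyS _ (hjw j hnot)).2.2
      obtain ⟨i, hi⟩ := hfp x hx imp himpC himpne
      have hcov : s ≤ (Finset.univ.filter (fun j : Fin c => imp j i = x i)).card := by
        set J1 : Finset (Fin c) :=
          Finset.univ.filter (fun j : Fin c => (j : ℕ) < lam ∧ i ∈ G) with hJ1
        set J2 : Finset (Fin c) := Finset.univ.filter
          (fun j : Fin c => lam ≤ (j : ℕ) ∧ (j : ℕ) - lam < w ∧ i ∈ S0 ((j : ℕ) - lam)) with hJ2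
        have hsub : J1 ∪ J2 ⊆ Finset.univ.filter (fun j => imp j i = x i) := by
          intro j hj
          refine Finset.mem_filter.2 ⟨Finset.mem_univ _, ?_⟩
          rcases Finset.mem_union.1 hj with h | h
          · rw [hJ1, Finset.mem_filter] at h
            rw [himp]
            dsimp only
            rw [if_pos h.2.1]
            exact hyGa i h.2.2
          · rw [hJ2, Finset.mem_filter] at h
            rw [himp]
            dsimp only
            rw [if_neg (by omega)]
            exact (hyS _ h.2.2.1).2.1 i (hSsub _ h.2.2.2)
        have hdisj : Disjoint J1 J2 := by
          rw [Finset.disjoint_left]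
          intro j h1 h2
          rw [hJ1, Finset.mem_filter] at h1
          rw [hJ2, Finset.mem_filter] at h2
          omega
        have hJ2card : δ i ≤ J2.card := by
          refine le_trans (hS0cov i) ?_
          apply Finset.card_le_card_of_injOn
            (fun m => (⟨(lam + m) % c, Nat.mod_lt _ (by omega)⟩ : Fin c))
          · intro m hm
            rw [Finset.mem_coe, Finset.mem_filter, Finset.mem_range] at hm
            have hmc : lam + m < c := by omega
            rw [Finset.mem_coe, hJ2, Finset.mem_filter]
            refine ⟨Finset.mem_univ _, ?_⟩
            simp only [Nat.mod_eq_of_lt hmc]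
            refine ⟨by omega, by omega, ?_⟩
            have : lam + m - lam = m := by omega
            rw [this]
            exact hm.2
          · intro m1 h1 m2 h2 heq
            rw [Finset.mem_coe, Finset.mem_filter, Finset.mem_range] at h1 h2
            have hm1 : lam + m1 < c := by omega
            have hm2 : lam + m2 < c := by omega
            have := congrArg Fin.val heq
            simp only [Nat.mod_eq_of_lt hm1, Nat.mod_eq_of_lt hm2] at this
            omega
        have hcardle := Finset.card_le_card hsub
        rw [Finset.card_union_of_disjoint hdisj] at hcardle
        by_cases hiG : i ∈ G
        · have hJ1card : J1.card = lam := by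
            have : J1 = Finset.univ.filter (fun j : Fin c => (j : ℕ) < lam) := by
              rw [hJ1]
              congr 1
              ext j
              simp [hiG]
            rw [this, card_filter_val_lt c lam (by omega)]
          have hδi : δ i = s - lam := by rw [hδ]; dsimp only; rw [if_pos hiG]
          omega
        · have hδi : δ i = s := by rw [hδ]; dsimp only; rw [if_neg hiG]
          omega
      omega
    -- union bound
    have hcover : C ⊆ owners C G ∪ (Finset.range w).biUnion (fun m => owners C (S m)) := by
      intro x hx
      rcases claimA x hx with h | ⟨m, hm, h⟩
      · exact Finset.mem_union_left _ (mem_owners.2 ⟨hx, h⟩)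
      · exact Finset.mem_union_right _
          (Finset.mem_biUnion.2 ⟨m, Finset.mem_range.2 hm, mem_owners.2 ⟨hx, h⟩⟩)
    have hsum : ∑ m ∈ Finset.range w, (owners C (S m)).card ≤ w * astar := by
      calc ∑ m ∈ Finset.range w, (owners C (S m)).card
          ≤ ∑ _m ∈ Finset.range w, astar :=
            Finset.sum_le_sum (fun m _ => hamax (S m) (hScard m))
        _ = w * astar := by rw [Finset.sum_const, Finset.card_range, smul_eq_mul]
    have hastar_le : astar ≤ q ^ D := by
      rw [hast, ← hRcard]
      exact card_owners_le C Rstar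
    have hbG : (owners C G).card ≤ astar + (q ^ D - astar) * q := by
      have hins := card_owners_insert_le C hp
      rw [hRcard] at hins
      rw [hG]
      exact hins
    calc C.card
        ≤ (owners C G ∪ (Finset.range w).biUnion (fun m => owners C (S m))).card :=
          Finset.card_le_card hcover
      _ ≤ (owners C G).card + ((Finset.range w).biUnion (fun m => owners C (S m))).card :=
          Finset.card_union_le _ _
      _ ≤ (owners C G).card + ∑ m ∈ Finset.range w, (owners C (S m)).card :=
          Nat.add_le_add_left Finset.card_biUnion_le _
      _ ≤ (astar + (q ^ D - astar) * q) + w * astar := Nat.add_le_add hbG hsum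
      _ ≤ q ^ (D + 1) := by
          have h1 : 1 + w ≤ q := by omega
          have h2 : astar + w * astar = (1 + w) * astar := by ring
          have h3 : (1 + w) * astar ≤ q * astar := Nat.mul_le_mul_right _ h1
          have h4 : (q ^ D - astar) * q + q * astar = q ^ D * q := by
            rw [mul_comm q astar, ← Nat.add_mul, Nat.sub_add_cancel hastar_le]
          have h5 : q ^ D * q = q ^ (D + 1) := (pow_succ q D).symm
          omega
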